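/- arXiv:2402.08018 — 2 statements merged into one kernel-verified Lean document; each statement's English description precedes it below -/
import Mathlib

section
/- (KNN vs Monte Carlo variance bound) Let ℓ_i = p_t(z|x^{(i)}) > 0 be Gaussian forward likelihoods, K ⊆ {1,...,N} the indices of the k largest ℓ_i, with ℓ_k = min_{i∈K} ℓ_i, and define the KNN proposal q_i = ℓ_i/Z_q for i ∈ K and q_i = ℓ_k/Z_q for i ∉ K, where Z_q = Σ_{i∈K} ℓ_i + (N−k) ℓ_k. Let p_i = ℓ_i / (N p_t(z)) with p_t(z) = (1/N)Σ_i ℓ_i be the posterior. Then Σ_i (p_i²/q_i)‖x^{(i)} − μ‖² ≤ (Z_q / p_t(z)) Σ_i p_i ‖x^{(i)} − μ‖², where μ = Σ_i p_i x^{(i)}. Equivalently Tr(Cov(μ̂_KNN)) ≤ (Z_q/p_t(z))·Tr(Cov(μ̂_MC)) for any fixed sample size n ≥ 1. -/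
open scoped BigOperators

/-- Theorem 1, KNN vs Monte Carlo variance bound:
Tr(Cov(μ̂_KNN)) ≤ (Z_q / p_t(z)) · Tr(Cov(μ̂_MC)). -/
theorem knn_vs_mc_trace_bound
    (d N n k : ℕ) (hN : 0 < N) (hn : 1 ≤ n) (hk : 1 ≤ k) (hkN : k ≤ N)
    (x : Fin N → EuclideanSpace ℝ (Fin d))
    (ℓ : Fin N → ℝ) (hℓ : ∀ i, 0 < ℓ i)
    (K : Finset (Fin N)) (hK : K.card = k)
    (ℓk : ℝ) (hℓk_mem : ∃ i ∈ K, ℓ i = ℓk)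
    (hℓk_min : ∀ i ∈ K, ℓk ≤ ℓ i)
    (hout : ∀ i ∉ K, ℓ i ≤ ℓk)
    (ptz : ℝ) (hptz : ptz = (1 / (N : ℝ)) * ∑ i, ℓ i)
    (p : Fin N → ℝ) (hp : ∀ i, p i = ℓ i / ((N : ℝ) * ptz))
    (Zq : ℝ) (hZq : Zq = (∑ i ∈ K, ℓ i) + ((N : ℝ) - (k : ℝ)) * ℓk)
    (q : Fin N → ℝ)
    (hq : ∀ i, q i = if i ∈ K then ℓ i / Zq else ℓk / Zq)
    (μ : EuclideanSpace ℝ (Fin d)) (hμ : μ = ∑ i, p i • x i) :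
    (1 / (n : ℝ)) * ∑ i, (p i ^ 2 / q i) * ‖x i - μ‖ ^ 2
      ≤ (Zq / ptz) * ((1 / (n : ℝ)) * ∑ i, p i * ‖x i - μ‖ ^ 2) := by
  have hptz0 : 0 < ptz := by
    rw [hptz]
    have hs : 0 < ∑ i, ℓ i :=
      Finset.sum_pos (fun i _ => hℓ i) ⟨⟨0, hN⟩, Finset.mem_univ _⟩
    have hN0 : (0:ℝ) < N := by exact_mod_cast hN
    positivity
  obtain ⟨j, hjK, hjℓ⟩ := hℓk_mem
  have hℓk0 : 0 < ℓk := hjℓ ▸ hℓ j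
  have hNk : (k:ℝ) ≤ (N:ℝ) := by exact_mod_cast hkN
  have hZq0 : 0 < Zq := by
    rw [hZq]
    have h1 : 0 < ∑ i ∈ K, ℓ i := Finset.sum_pos (fun i _ => hℓ i) ⟨j, hjK⟩
    nlinarith
  have hN1 : (1:ℝ) ≤ (N:ℝ) := by exact_mod_cast hN
  have key : ∀ i, p i ^ 2 / q i ≤ (Zq / ptz) * p i := by
    intro i
    rw [hq i, hp i]
    have hℓi := hℓ i
    by_cases hi : i ∈ K
    · simp only [hi, if_true]
      have h : (ℓ i / ((N:ℝ) * ptz)) ^ 2 / (ℓ i / Zq)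
          = ℓ i * Zq / ((N:ℝ) * ptz) ^ 2 := by
        field_simp
      rw [h, div_le_iff₀ (by positivity)]
      have h2 : Zq / ptz * (ℓ i / ((N:ℝ) * ptz)) * ((N:ℝ) * ptz) ^ 2
          = Zq * ℓ i * N := by field_simp
      rw [h2]
      nlinarith [mul_pos hℓi hZq0]
    · simp only [hi, if_false]
      have hle : ℓ i ≤ ℓk := hout i hi
      have h : (ℓ i / ((N:ℝ) * ptz)) ^ 2 / (ℓk / Zq)
          = ℓ i ^ 2 * Zq / (ℓk * ((N:ℝ) * ptz) ^ 2) := by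
        field_simp
      rw [h, div_le_iff₀ (by positivity)]
      have h2 : Zq / ptz * (ℓ i / ((N:ℝ) * ptz)) * (ℓk * ((N:ℝ) * ptz) ^ 2)
          = Zq * ℓ i * ℓk * N := by field_simp
      rw [h2]
      nlinarith [mul_pos hZq0 hℓi, mul_pos (mul_pos hZq0 hℓi) hℓk0]
  calc (1 / (n : ℝ)) * ∑ i, (p i ^ 2 / q i) * ‖x i - μ‖ ^ 2
      ≤ (1 / (n : ℝ)) * ∑ i, (Zq / ptz) * (p i * ‖x i - μ‖ ^ 2) := by
        apply mul_le_mul_of_nonneg_left _ (by positivity)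
        apply Finset.sum_le_sum
        intro i _
        have hx : (0:ℝ) ≤ ‖x i - μ‖ ^ 2 := by positivity
        calc (p i ^ 2 / q i) * ‖x i - μ‖ ^ 2
            ≤ ((Zq / ptz) * p i) * ‖x i - μ‖ ^ 2 :=
              mul_le_mul_of_nonneg_right (key i) hx
          _ = (Zq / ptz) * (p i * ‖x i - μ‖ ^ 2) := by ring
    _ = (Zq / ptz) * ((1 / (n : ℝ)) * ∑ i, p i * ‖x i - μ‖ ^ 2) := by
        rw [← Finset.mul_sum]; ring
end

section
/- (KNN vs uniform SNIS bound) Under the KNN proposal setup, Tr(Cov(μ̂_KNN)) ≤ (1 − Σ_{i∉K} ℓ_i / (N p_t(z))) · Tr(Cov(μ̂_MC)) + ((N−k)/N) · Tr(Cov(μ̂_U)), where Tr(Cov(μ̂_MC)) = (1/n)Σ_i p_i‖x^{(i)}−μ‖² and Tr(Cov(μ̂_U)) = (N/n)Σ_i p_i²‖x^{(i)}−μ‖². -/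
open scoped BigOperators

set_option maxHeartbeats 1000000 in
/-- Theorem 2, KNN vs uniform SNIS bound:
Tr(Cov(μ̂_KNN)) ≤ (1 − Σ_{i∉K} ℓ_i/(N p_t(z)))·Tr(Cov(μ̂_MC))
  + ((N−k)/N)·Tr(Cov(μ̂_U)). -/
theorem knn_vs_uniform_trace_bound
    (d N n k : ℕ) (hN : 0 < N) (hn : 1 ≤ n) (hk : 1 ≤ k) (hkN : k ≤ N)
    (x : Fin N → EuclideanSpace ℝ (Fin d))
    (ℓ : Fin N → ℝ) (hℓ : ∀ i, 0 < ℓ i)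
    (K : Finset (Fin N)) (hK : K.card = k)
    (ℓk : ℝ) (hℓk_mem : ∃ i ∈ K, ℓ i = ℓk)
    (hℓk_min : ∀ i ∈ K, ℓk ≤ ℓ i)
    (hout : ∀ i ∉ K, ℓ i ≤ ℓk)
    (ptz : ℝ) (hptz : ptz = (1 / (N : ℝ)) * ∑ i, ℓ i)
    (p : Fin N → ℝ) (hp : ∀ i, p i = ℓ i / ((N : ℝ) * ptz))
    (Zq : ℝ) (hZq : Zq = (∑ i ∈ K, ℓ i) + ((N : ℝ) - (k : ℝ)) * ℓk)
    (q : Fin N → ℝ)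
    (hq : ∀ i, q i = if i ∈ K then ℓ i / Zq else ℓk / Zq)
    (μ : EuclideanSpace ℝ (Fin d)) (hμ : μ = ∑ i, p i • x i) :
    (1 / (n : ℝ)) * ∑ i, (p i ^ 2 / q i) * ‖x i - μ‖ ^ 2
      ≤ (1 - (∑ i ∈ Kᶜ, ℓ i) / ((N : ℝ) * ptz)) *
          ((1 / (n : ℝ)) * ∑ i, p i * ‖x i - μ‖ ^ 2)
        + (((N : ℝ) - (k : ℝ)) / (N : ℝ)) *
          (((N : ℝ) / (n : ℝ)) * ∑ i, p i ^ 2 * ‖x i - μ‖ ^ 2) := by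
  have hN0 : ((N : ℝ)) ≠ 0 := Nat.cast_ne_zero.mpr hN.ne'
  have hn0 : ((n : ℝ)) ≠ 0 := Nat.cast_ne_zero.mpr (by omega)
  set S : ℝ := ∑ i, ℓ i with hS
  have hSpos : 0 < S := Finset.sum_pos (fun i _ => hℓ i) ⟨⟨0, hN⟩, Finset.mem_univ _⟩
  have hNptz : (N : ℝ) * ptz = S := by rw [hptz]; field_simp
  have hℓkpos : 0 < ℓk := by
    obtain ⟨i, _, hi⟩ := hℓk_mem; exact hi ▸ hℓ i
  have hNk : (0:ℝ) ≤ (N : ℝ) - (k : ℝ) := by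
    have : (k:ℝ) ≤ (N:ℝ) := Nat.cast_le.mpr hkN
    linarith
  have hKsum : 0 < ∑ i ∈ K, ℓ i := by
    apply Finset.sum_pos (fun i _ => hℓ i)
    exact Finset.card_pos.mp (by omega)
  have hZqpos : 0 < Zq := by rw [hZq]; positivity
  have hsplit : (∑ i ∈ K, ℓ i) + (∑ i ∈ Kᶜ, ℓ i) = S := Finset.sum_add_sum_compl K ℓ
  have hc : 1 - (∑ i ∈ Kᶜ, ℓ i) / ((N : ℝ) * ptz) = (∑ i ∈ K, ℓ i) / S := by
    rw [hNptz]; field_simp; linarith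
  -- pointwise bound
  have key : ∀ i, p i ^ 2 / q i ≤
      ((∑ j ∈ K, ℓ j) / S) * p i + ((N : ℝ) - (k : ℝ)) * p i ^ 2 := by
    intro i
    have hℓi := hℓ i
    have hS2 : (0:ℝ) < S ^ 2 := by positivity
    rw [hp i, hq i, hNptz]
    by_cases hi : i ∈ K
    · rw [if_pos hi]
      have h1 : ℓk ≤ ℓ i := hℓk_min i hi
      have e1 : (ℓ i / S) ^ 2 / (ℓ i / Zq) = ℓ i * Zq / S ^ 2 := by
        field_simp; try ring
      rw [e1, hZq, div_le_iff₀ hS2]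
      have expand : ((∑ j ∈ K, ℓ j) / S * (ℓ i / S) + ((N:ℝ) - k) * (ℓ i / S) ^ 2) * S ^ 2
          = (∑ j ∈ K, ℓ j) * ℓ i + ((N:ℝ) - k) * ℓ i ^ 2 := by
        field_simp; try ring
      rw [expand]
      nlinarith [mul_le_mul_of_nonneg_left h1 (mul_nonneg hNk hℓi.le)]
    · rw [if_neg hi]
      have h1 : ℓ i ≤ ℓk := hout i hi
      have e2 : (ℓ i / S) ^ 2 / (ℓk / Zq) = ℓ i ^ 2 * Zq / (S ^ 2 * ℓk) := by
        field_simp; try ring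
      rw [e2, hZq, div_le_iff₀ (by positivity : (0:ℝ) < S ^ 2 * ℓk)]
      have expand : ((∑ j ∈ K, ℓ j) / S * (ℓ i / S) + ((N:ℝ) - k) * (ℓ i / S) ^ 2) * (S ^ 2 * ℓk)
          = (∑ j ∈ K, ℓ j) * ℓ i * ℓk + ((N:ℝ) - k) * ℓ i ^ 2 * ℓk := by
        field_simp; try ring
      rw [expand]
      nlinarith [mul_le_mul_of_nonneg_left (mul_le_mul h1 h1 hℓi.le hℓkpos.le) hKsum.le]
  -- sum the pointwise bound
  have hsum : ∑ i, (p i ^ 2 / q i) * ‖x i - μ‖ ^ 2 ≤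
      ∑ i, (((∑ j ∈ K, ℓ j) / S) * p i + ((N : ℝ) - (k : ℝ)) * p i ^ 2) * ‖x i - μ‖ ^ 2 := by
    apply Finset.sum_le_sum
    intro i _
    exact mul_le_mul_of_nonneg_right (key i) (by positivity)
  rw [hc]
  have hRHS : ((∑ j ∈ K, ℓ j) / S) * ((1 / (n : ℝ)) * ∑ i, p i * ‖x i - μ‖ ^ 2)
        + (((N : ℝ) - (k : ℝ)) / (N : ℝ)) *
          (((N : ℝ) / (n : ℝ)) * ∑ i, p i ^ 2 * ‖x i - μ‖ ^ 2)
      = (1 / (n : ℝ)) * ∑ i, (((∑ j ∈ K, ℓ j) / S) * p i + ((N : ℝ) - (k : ℝ)) * p i ^ 2) * ‖x i - μ‖ ^ 2 := by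
    rw [Finset.sum_congr rfl (fun i _ => by ring :
      ∀ i ∈ Finset.univ, (((∑ j ∈ K, ℓ j) / S) * p i + ((N : ℝ) - (k : ℝ)) * p i ^ 2) * ‖x i - μ‖ ^ 2
        = ((∑ j ∈ K, ℓ j) / S) * (p i * ‖x i - μ‖ ^ 2) + ((N : ℝ) - (k : ℝ)) * (p i ^ 2 * ‖x i - μ‖ ^ 2))]
    rw [Finset.sum_add_distrib, ← Finset.mul_sum, ← Finset.mul_sum]
    field_simp
  rw [hRHS]
  have hn' : (0:ℝ) < (1 / (n : ℝ)) := by positivity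
  exact mul_le_mul_of_nonneg_left hsum hn'.le
end
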